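/- Let A = (1 - 4X - X^2)/(1 - X^2) and B = (1 - 4Y - Y^2)/(1 - Y^2), where X, Y satisfy the relation X^2 - Y + 2XY + X^2Y + Y^2 = 0 (with appropriate nonvanishing hypotheses). Then A^2 + 4AB + B^2 - 5A - A*B^2 = 0. -/
import Mathlib


theorem stmt_3 {K : Type*} [Field K] (X Y : K) (hX : X ≠ 0) (hY : Y ≠ 0)
    (hX2 : 1 - X^2 ≠ 0) (hY2 : 1 - Y^2 ≠ 0)
    (hA : 1 - (1 - 4*X - X^2)/(1 - X^2) ≠ 0)
    (hB : 1 - (1 - 4*Y - Y^2)/(1 - Y^2) ≠ 0)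
    (hrel : X^2 - Y + 2*X*Y + X^2*Y + Y^2 = 0) :
    ((1 - 4*X - X^2)/(1 - X^2))^2
      + 4 * ((1 - 4*X - X^2)/(1 - X^2)) * ((1 - 4*Y - Y^2)/(1 - Y^2))
      + ((1 - 4*Y - Y^2)/(1 - Y^2))^2
      - 5 * ((1 - 4*X - X^2)/(1 - X^2))
      - ((1 - 4*X - X^2)/(1 - X^2)) * ((1 - 4*Y - Y^2)/(1 - Y^2))^2 = 0 := by
  have hu : (1 - X^2) * (1 - X^2)⁻¹ = 1 := mul_inv_cancel₀ hX2
  have hv : (1 - Y^2) * (1 - Y^2)⁻¹ = 1 := mul_inv_cancel₀ hY2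
  simp only [div_eq_mul_inv]
  linear_combination
    (16 + 16*Y - 32*X*Y - 16*X^2*Y + 16*X^2*Y^2) * ((1-X^2)⁻¹)^2 * ((1-Y^2)⁻¹)^2 * hrel
    + (-4*(1-4*X-X^2)*(1-4*Y-Y^2)*(1-X^2)⁻¹*(1-Y^2)⁻¹
        - (1-4*Y-Y^2)^2*((1-Y^2)⁻¹)^2*(1+(1-X^2)*(1-X^2)⁻¹)
        + 5*(1-4*X-X^2)*(1-X^2)⁻¹
        + (1-4*X-X^2)*(1-4*Y-Y^2)^2*(1-X^2)⁻¹*((1-Y^2)⁻¹)^2) * hu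
    + (-(1-4*X-X^2)^2*((1-X^2)⁻¹)^2*(1+(1-Y^2)*(1-Y^2)⁻¹)
        - 4*(1-4*X-X^2)*(1-4*Y-Y^2)*(1-X^2)*((1-X^2)⁻¹)^2*(1-Y^2)⁻¹
        + 5*(1-4*X-X^2)*(1-X^2)*((1-X^2)⁻¹)^2*((1-Y^2)*(1-Y^2)⁻¹+1)) * hv
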